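/- Let k be a field and r ≥ 1. Consider the polynomial ring k[z, w] and the subalgebra A generated by z^r, w^r, and z·w. Then the kernel of the k-algebra homomorphism k[u, v, t] → k[z, w] sending u ↦ z^r, v ↦ w^r, t ↦ z·w is the ideal generated by u·v − t^r. In particular, A ≅ k[u, v, t]/(uv − t^r). -/

import Mathlib

open MvPolynomial

noncomputable def stmt6F (k : Type) [Field k] (r : ℕ) (e : Fin 2 →₀ ℕ) :
    MvPolynomial (Fin 3) k :=
  if e 1 ≤ e 0 then
    (if r ∣ e 0 - e 1 then
      monomial (Finsupp.single 0 ((e 0 - e 1) / r) + Finsupp.single 2 (e 1)) (1 : k) else 0)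
  else
    (if r ∣ e 1 - e 0 then
      monomial (Finsupp.single 1 ((e 1 - e 0) / r) + Finsupp.single 2 (e 0)) (1 : k) else 0)

noncomputable def stmt6rho (k : Type) [Field k] (r : ℕ) :
    MvPolynomial (Fin 2) k →ₗ[k] MvPolynomial (Fin 3) k :=
  (MvPolynomial.basisMonomials (Fin 2) k).constr k (stmt6F k r)

theorem stmt6rho_monomial (k : Type) [Field k] (r : ℕ) (e : Fin 2 →₀ ℕ) (a : k) :
    stmt6rho k r (monomial e a) = a • stmt6F k r e := by
  have h : (monomial e a : MvPolynomial (Fin 2) k) =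
      a • (MvPolynomial.basisMonomials (Fin 2) k) e := by
    simp [MvPolynomial.coe_basisMonomials, smul_monomial]
  rw [h, map_smul, stmt6rho, Module.Basis.constr_basis]

theorem stmt6_mono2 (k : Type) [Field k] (m n : ℕ) (a : k) :
    (C a * X 0 ^ m * X 1 ^ n : MvPolynomial (Fin 2) k) =
      monomial (Finsupp.single 0 m + Finsupp.single 1 n) a := by
  rw [X_pow_eq_monomial, X_pow_eq_monomial, mul_assoc, monomial_mul, C_mul_monomial, mul_one, mul_one]

theorem stmt6_mono3 (k : Type) [Field k] (A B C' : ℕ) (a : k) :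
    (monomial (Finsupp.single 0 A + Finsupp.single 1 B + Finsupp.single 2 C') a :
        MvPolynomial (Fin 3) k) = C a * X 0 ^ A * X 1 ^ B * X 2 ^ C' := by
  rw [X_pow_eq_monomial, X_pow_eq_monomial, X_pow_eq_monomial, mul_assoc, mul_assoc,
    monomial_mul, monomial_mul, C_mul_monomial]
  ring_nf
  rw [add_assoc]

theorem stmt6_fin3 (e : Fin 3 →₀ ℕ) :
    e = Finsupp.single 0 (e 0) + Finsupp.single 1 (e 1) + Finsupp.single 2 (e 2) := by
  ext i
  fin_cases i <;> simp [Finsupp.single_apply]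

theorem stmt6phi_monomial (k : Type) [Field k] (r : ℕ) (e : Fin 3 →₀ ℕ) (a : k) :
    aeval (R := k) (![X 0 ^ r, X 1 ^ r, X 0 * X 1] : Fin 3 → MvPolynomial (Fin 2) k)
        (monomial e a) =
      monomial (Finsupp.single 0 (r * e 0 + e 2) + Finsupp.single 1 (r * e 1 + e 2)) a := by
  rw [aeval_monomial, Finsupp.prod_fintype _ _ (fun i => pow_zero _), Fin.prod_univ_three]
  simp only [Matrix.cons_val_zero, Matrix.cons_val_one, Matrix.head_cons, Matrix.cons_val_two,
    Matrix.tail_cons]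
  rw [← stmt6_mono2]
  rw [algebraMap_eq]
  ring

theorem stmt6_key_mono (k : Type) [Field k] (r : ℕ) (hr : 1 ≤ r) (e : Fin 3 →₀ ℕ) (a : k) :
    (monomial e a : MvPolynomial (Fin 3) k) -
      stmt6rho k r (aeval (R := k)
        (![X 0 ^ r, X 1 ^ r, X 0 * X 1] : Fin 3 → MvPolynomial (Fin 2) k) (monomial e a)) ∈
    Ideal.span {(X 0 * X 1 - X 2 ^ r : MvPolynomial (Fin 3) k)} := by
  have hr0 : r ≠ 0 := by omega
  rw [stmt6phi_monomial, stmt6rho_monomial]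
  set A := e 0 with hA
  set B := e 1 with hB
  set C' := e 2 with hC
  set e' : Fin 2 →₀ ℕ := Finsupp.single 0 (r * A + C') + Finsupp.single 1 (r * B + C') with he'
  have h0 : e' 0 = r * A + C' := by simp [he', Finsupp.single_apply]
  have h1 : e' 1 = r * B + C' := by simp [he', Finsupp.single_apply]
  have hedecomp := stmt6_fin3 e
  rw [Ideal.mem_span_singleton]
  by_cases hAB : B ≤ A
  · have hle : e' 1 ≤ e' 0 := by rw [h0, h1]; nlinarith [hAB]
    have hsub : e' 0 - e' 1 = r * (A - B) := by
      rw [h0, h1, Nat.add_sub_add_right, Nat.mul_sub_left_distrib]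
    have hF : stmt6F k r e' =
        monomial (Finsupp.single 0 (A - B) + Finsupp.single 2 (r * B + C')) (1 : k) := by
      rw [stmt6F, if_pos hle, if_pos (hsub ▸ Dvd.intro _ rfl), hsub,
        Nat.mul_div_cancel_left _ (Nat.pos_of_ne_zero hr0), h1]
    rw [hF]
    obtain ⟨q, hq⟩ := sub_dvd_pow_sub_pow (X 0 * X 1 : MvPolynomial (Fin 3) k) (X 2 ^ r) B
    refine ⟨C a * X 0 ^ (A - B) * X 2 ^ C' * q, ?_⟩
    rw [hedecomp, ← hA, ← hB, ← hC, stmt6_mono3]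
    have hmon2 : (monomial (Finsupp.single 0 (A - B) + Finsupp.single 2 (r * B + C')) (a : k) :
        MvPolynomial (Fin 3) k) = C a * X 0 ^ (A - B) * X 1 ^ 0 * X 2 ^ (r * B + C') := by
      rw [show (Finsupp.single 0 (A - B) + Finsupp.single 2 (r * B + C') : Fin 3 →₀ ℕ) =
        Finsupp.single 0 (A - B) + Finsupp.single 1 0 + Finsupp.single 2 (r * B + C') by simp,
        stmt6_mono3]
    rw [smul_monomial, smul_eq_mul, mul_one, hmon2]
    have hApow : (X 0 : MvPolynomial (Fin 3) k) ^ A = X 0 ^ (A - B) * X 0 ^ B := by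
      rw [← pow_add, Nat.sub_add_cancel hAB]
    rw [hApow, pow_add, pow_mul]
    linear_combination (C a * X 0 ^ (A - B) * X 2 ^ C') * hq
  · have hAB' : A ≤ B := le_of_not_ge hAB
    have hle : ¬ e' 1 ≤ e' 0 := by
      rw [h0, h1]; push_neg
      nlinarith [lt_of_not_ge hAB, Nat.pos_of_ne_zero hr0]
    have hsub : e' 1 - e' 0 = r * (B - A) := by
      rw [h0, h1, Nat.add_sub_add_right, Nat.mul_sub_left_distrib]
    have hF : stmt6F k r e' =
        monomial (Finsupp.single 1 (B - A) + Finsupp.single 2 (r * A + C')) (1 : k) := by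
      rw [stmt6F, if_neg hle, if_pos (hsub ▸ Dvd.intro _ rfl), hsub,
        Nat.mul_div_cancel_left _ (Nat.pos_of_ne_zero hr0), h0]
    rw [hF]
    obtain ⟨q, hq⟩ := sub_dvd_pow_sub_pow (X 0 * X 1 : MvPolynomial (Fin 3) k) (X 2 ^ r) A
    refine ⟨C a * X 1 ^ (B - A) * X 2 ^ C' * q, ?_⟩
    rw [hedecomp, ← hA, ← hB, ← hC, stmt6_mono3]
    have hmon2 : (monomial (Finsupp.single 1 (B - A) + Finsupp.single 2 (r * A + C')) (a : k) :
        MvPolynomial (Fin 3) k) = C a * X 0 ^ 0 * X 1 ^ (B - A) * X 2 ^ (r * A + C') := by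
      rw [show (Finsupp.single 1 (B - A) + Finsupp.single 2 (r * A + C') : Fin 3 →₀ ℕ) =
        Finsupp.single 0 0 + Finsupp.single 1 (B - A) + Finsupp.single 2 (r * A + C') by simp,
        stmt6_mono3]
    rw [smul_monomial, smul_eq_mul, mul_one, hmon2]
    have hBpow : (X 1 : MvPolynomial (Fin 3) k) ^ B = X 1 ^ (B - A) * X 1 ^ A := by
      rw [← pow_add, Nat.sub_add_cancel hAB']
    rw [hBpow, pow_add, pow_mul]
    linear_combination (C a * X 1 ^ (B - A) * X 2 ^ C') * hq

/-- The kernel of `k[u,v,t] → k[z,w]`, `u ↦ z^r`, `v ↦ w^r`, `t ↦ zw`, is the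
ideal `(uv - t^r)`; in particular the subalgebra `A = k[z^r, w^r, zw]` is
isomorphic to `k[u,v,t]/(uv - t^r)` (the `A_{r-1}` singularity). -/
theorem stmt_6 (k : Type) [Field k] (r : ℕ) (hr : 1 ≤ r) :
    RingHom.ker (aeval (R := k)
        (![X 0 ^ r, X 1 ^ r, X 0 * X 1] : Fin 3 → MvPolynomial (Fin 2) k)).toRingHom =
      Ideal.span {(X 0 * X 1 - X 2 ^ r : MvPolynomial (Fin 3) k)} ∧
    Nonempty ((MvPolynomial (Fin 3) k ⧸
        Ideal.span {(X 0 * X 1 - X 2 ^ r : MvPolynomial (Fin 3) k)}) ≃ₐ[k]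
      Algebra.adjoin k {(X 0 ^ r : MvPolynomial (Fin 2) k), X 1 ^ r, X 0 * X 1}) := by
  set φ : MvPolynomial (Fin 3) k →ₐ[k] MvPolynomial (Fin 2) k :=
    aeval (R := k) (![X 0 ^ r, X 1 ^ r, X 0 * X 1] : Fin 3 → MvPolynomial (Fin 2) k) with hφ
  have hgen : φ (X 0 * X 1 - X 2 ^ r : MvPolynomial (Fin 3) k) = 0 := by
    simp [hφ, mul_pow]
  have hker : RingHom.ker φ.toRingHom =
      Ideal.span {(X 0 * X 1 - X 2 ^ r : MvPolynomial (Fin 3) k)} := by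
    apply le_antisymm
    · intro p hp
      have hp0 : φ p = 0 := hp
      have key : p - stmt6rho k r (φ p) ∈
          Ideal.span {(X 0 * X 1 - X 2 ^ r : MvPolynomial (Fin 3) k)} := by
        nth_rewrite 1 2 [p.as_sum]
        rw [map_sum, map_sum, ← Finset.sum_sub_distrib]
        exact Ideal.sum_mem _ fun e _ => stmt6_key_mono k r hr e _
      rwa [hp0, map_zero, sub_zero] at key
    · rw [Ideal.span_le]
      intro x hx
      rw [Set.mem_singleton_iff] at hx
      subst hx
      exact hgen
  refine ⟨hker, ?_⟩
  rw [← hker]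
  have e1 : (MvPolynomial (Fin 3) k ⧸ RingHom.ker φ) ≃ₐ[k]
      (Ideal.kerLiftAlg φ).range :=
    AlgEquiv.ofInjective _ (Ideal.kerLiftAlg_injective φ)
  have hr1 : (Ideal.kerLiftAlg φ).range = φ.range := by
    ext x
    simp only [AlgHom.mem_range]
    constructor
    · rintro ⟨q, rfl⟩
      obtain ⟨p, rfl⟩ := Ideal.Quotient.mk_surjective q
      exact ⟨p, (Ideal.kerLiftAlg_mk φ p).symm⟩
    · rintro ⟨p, rfl⟩
      exact ⟨Ideal.Quotient.mk _ p, Ideal.kerLiftAlg_mk φ p⟩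
  have hr2 : φ.range =
      Algebra.adjoin k {(X 0 ^ r : MvPolynomial (Fin 2) k), X 1 ^ r, X 0 * X 1} := by
    rw [hφ, ← Algebra.adjoin_range_eq_range_aeval]
    congr 1
    ext x
    constructor
    · rintro ⟨i, rfl⟩
      fin_cases i <;> simp
    · intro hx
      simp only [Set.mem_insert_iff, Set.mem_singleton_iff] at hx
      rcases hx with h | h | h
      exacts [⟨0, by simp [h]⟩, ⟨1, by simp [h]⟩, ⟨2, by simp [h]⟩]
  exact ⟨e1.trans (Subalgebra.equivOfEq _ _ (hr1.trans hr2))⟩
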